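/- (Binning/list-decoding step of the compress-and-forward scheme.) Let (Ŷ,Y) have joint pmf p(ŷ,y) on finite alphabets. Let Y^n be a random sequence on 𝒴^n, let z0 be a fixed index, and let Ŷ^n(z) for z∈{1,…,⌈2^{nR̂}⌉} be codewords each distributed i.i.d. according to the marginal p(ŷ) such that Ŷ^n(z) is independent of Y^n for every z ≠ z0. Independently of everything else, assign to each index z a bin B(z) uniformly at random from {1,…,⌈2^{nR}⌉}. There exists δ(ε)>0 with δ(ε)→0 as ε→0 such that if R̂ < R + I(Ŷ;Y) − δ(ε), then the probability that there exists an index z ≠ z0 with B(z) = B(z0) and (Ŷ^n(z),Y^n) jointly strongly ε-typical with respect to p(ŷ,y) tends to 0 as n→∞. -/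

import Mathlib

/- Statement 13: Binning/list-decoding step of the compress-and-forward scheme
(Wyner–Ziv binning, cf. equation (16) of the paper): if `R̂ < R + I(Ŷ;Y) − δ(ε)` then
with probability tending to one no wrong compression index lands both in the correct
bin and in the joint-typicality list. -/

open Finset
open scoped Classical

noncomputable section

/-- `p` is a probability mass function on a finite type. -/
def IsPmf {A : Type} [Fintype A] (p : A → ℝ) : Prop :=
  (∀ a, 0 ≤ p a) ∧ ∑ a, p a = 1

/-- `p` is a transition kernel: for each `a`, `p a` is a pmf. -/
def IsKernel {A B : Type} [Fintype B] (p : A → B → ℝ) : Prop :=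
  ∀ a, IsPmf (p a)

/-- Distribution (pmf) of a random variable `X` under the pmf `μ` on `Ω`. -/
def rvDist {Ω A : Type} [Fintype Ω] (μ : Ω → ℝ) (X : Ω → A) (a : A) : ℝ :=
  ∑ ω, if X ω = a then μ ω else 0

/-- Shannon entropy (in bits) of the random variable `X` under `μ`. -/
def rvEnt {Ω A : Type} [Fintype Ω] [Fintype A] (μ : Ω → ℝ) (X : Ω → A) : ℝ :=
  -∑ a, rvDist μ X a * Real.logb 2 (rvDist μ X a)

/-- Mutual information `I(X;Y)` under `μ`. -/
def rvMI {Ω A B : Type} [Fintype Ω] [Fintype A] [Fintype B]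
    (μ : Ω → ℝ) (X : Ω → A) (Y : Ω → B) : ℝ :=
  rvEnt μ X + rvEnt μ Y - rvEnt μ (fun ω => (X ω, Y ω))

/-- Conditional mutual information `I(X;Y|Z)` under `μ`. -/
def rvCMI {Ω A B C : Type} [Fintype Ω] [Fintype A] [Fintype B] [Fintype C]
    (μ : Ω → ℝ) (X : Ω → A) (Y : Ω → B) (Z : Ω → C) : ℝ :=
  rvEnt μ (fun ω => (X ω, Z ω)) + rvEnt μ (fun ω => (Y ω, Z ω))
    - rvEnt μ (fun ω => (X ω, Y ω, Z ω)) - rvEnt μ Z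

/-- Number of occurrences of the symbol `a` in the length-`n` sequence `x`. -/
def nOcc {A : Type} {n : ℕ} (x : Fin n → A) (a : A) : ℕ :=
  (Finset.univ.filter fun j => x j = a).card

/-- Strong `ε`-typicality of the sequence `x` with respect to the pmf `p`:
`|N(a|xⁿ)/n − p a| ≤ ε · p a` for every symbol `a`. -/
def StrongTypical {A : Type} [Fintype A] (p : A → ℝ) (ε : ℝ) {n : ℕ}
    (x : Fin n → A) : Prop :=
  ∀ a, |((nOcc x a : ℝ)) / n - p a| ≤ ε * p a

section Bin

variable {H Y : Type} [Fintype H] [Fintype Y]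

/-- Marginal pmf of `Ŷ` under the joint pmf `p` on `Ŷ × Y`. -/
def margH (p : H × Y → ℝ) (h : H) : ℝ := ∑ y, p (h, y)

/-- Probability, under the joint distribution `ν` of the sequence `Yⁿ` and the
codebook `(Ŷⁿ(z))_z`, and under an independent uniformly random assignment
`b : z ↦ bin` into `B` bins, that some index `z ≠ z0` has `b z = b z0` and `Ŷⁿ(z)`
jointly strongly `ε`-typical with `Yⁿ` w.r.t. the joint pmf `p(ŷ,y)`. -/
def binProb (p : H × Y → ℝ) (ε : ℝ) {n Z : ℕ} (B : ℕ) (z0 : Fin Z)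
    (ν : (Fin n → Y) × (Fin Z → Fin n → H) → ℝ) : ℝ :=
  ∑ ω : (Fin n → Y) × (Fin Z → Fin n → H), ∑ b : Fin Z → Fin B,
    if ∃ z : Fin Z, z ≠ z0 ∧ b z = b z0 ∧
        StrongTypical p ε (fun j => (ω.2 z j, ω.1 j)) then
      ν ω * ((B : ℝ) ^ Z)⁻¹
    else 0

end Bin



def margY' {H Y : Type} [Fintype H] [Fintype Y] (p : H × Y → ℝ) (y : Y) : ℝ := ∑ h, p (h, y)

def negEnt {A : Type} [Fintype A] (w : A → ℝ) : ℝ := ∑ a, w a * Real.logb 2 (w a)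

lemma pmf_le_one {A : Type} [Fintype A] {p : A → ℝ} (hp : IsPmf p) (a : A) : p a ≤ 1 := by
  rw [← hp.2]
  exact Finset.single_le_sum (fun b _ => hp.1 b) (Finset.mem_univ a)

lemma isPmf_margH {H Y : Type} [Fintype H] [Fintype Y] {p : H × Y → ℝ} (hp : IsPmf p) :
    IsPmf (margH p) := by
  constructor
  · intro h; exact Finset.sum_nonneg fun y _ => hp.1 _
  · rw [← hp.2, Fintype.sum_prod_type]; rfl

lemma isPmf_margY' {H Y : Type} [Fintype H] [Fintype Y] {p : H × Y → ℝ} (hp : IsPmf p) :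
    IsPmf (margY' p) := by
  constructor
  · intro y; exact Finset.sum_nonneg fun h _ => hp.1 _
  · rw [← hp.2, Fintype.sum_prod_type_right]; rfl

lemma sum_ite_const {A : Type} [Fintype A] (c : Prop) [Decidable c] (f : A → ℝ) :
    (∑ a, if c then f a else 0) = if c then ∑ a, f a else 0 := by
  split <;> simp

lemma rvDist_fst {H Y : Type} [Fintype H] [Fintype Y] (p : H × Y → ℝ) :
    rvDist p (fun ω => ω.1) = margH p := by
  funext h
  simp only [rvDist, margH, Fintype.sum_prod_type]
  calc (∑ h' : H, ∑ y' : Y, if h' = h then p (h', y') else 0)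
      = ∑ h' : H, (if h' = h then ∑ y' : Y, p (h', y') else 0) :=
        Finset.sum_congr rfl fun h' _ => sum_ite_const _ _
    _ = ∑ y' : Y, p (h, y') := by rw [Finset.sum_ite_eq' Finset.univ h]; simp

lemma rvDist_snd {H Y : Type} [Fintype H] [Fintype Y] (p : H × Y → ℝ) :
    rvDist p (fun ω => ω.2) = margY' p := by
  funext y
  simp only [rvDist, margY', Fintype.sum_prod_type_right]
  calc (∑ y' : Y, ∑ h' : H, if y' = y then p (h', y') else 0)
      = ∑ y' : Y, (if y' = y then ∑ h' : H, p (h', y') else 0) :=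
        Finset.sum_congr rfl fun y' _ => sum_ite_const _ _
    _ = ∑ h' : H, p (h', y) := by rw [Finset.sum_ite_eq' Finset.univ y]; simp

lemma rvDist_pair {H Y : Type} [Fintype H] [Fintype Y] (p : H × Y → ℝ) :
    rvDist p (fun ω => (ω.1, ω.2)) = p := by
  funext a
  simp only [rvDist, Prod.mk.eta]
  rw [Finset.sum_ite_eq' Finset.univ a]
  simp

lemma rvMI_eq {H Y : Type} [Fintype H] [Fintype Y] (p : H × Y → ℝ) :
    rvMI p (fun ω => ω.1) (fun ω => ω.2) = negEnt p - negEnt (margH p) - negEnt (margY' p) := by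
  have h3 : rvDist p (fun ω : H × Y => ((fun ω : H × Y => ω.1) ω, (fun ω : H × Y => ω.2) ω)) = p := rvDist_pair p
  simp only [rvMI, rvEnt, rvDist_fst, rvDist_snd, h3, negEnt]
  ring

lemma rvDist_isPmf {Ω A : Type} [Fintype Ω] [Fintype A] {μ : Ω → ℝ} (hμ : IsPmf μ) (X : Ω → A) :
    IsPmf (rvDist μ X) := by
  constructor
  · intro a
    exact Finset.sum_nonneg fun ω _ => by split; exacts [hμ.1 ω, le_rfl]
  · rw [← hμ.2]
    simp only [rvDist]
    rw [Finset.sum_comm]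
    refine Finset.sum_congr rfl fun ω _ => ?_
    rw [Finset.sum_ite_eq Finset.univ (X ω)]
    simp

lemma two_rpow_sum {A : Type} (s : Finset A) (f : A → ℝ) :
    (2:ℝ) ^ (∑ a ∈ s, f a) = ∏ a ∈ s, (2:ℝ) ^ (f a) := by
  induction s using Finset.cons_induction with
  | empty => simp
  | cons a s ha ih =>
    rw [Finset.sum_cons, Finset.prod_cons, Real.rpow_add two_pos, ih]

lemma rpow_le_prod_pow {A : Type} [Fintype A] {w : A → ℝ} {N : A → ℕ} {m : A → ℝ}
    (h0 : ∀ a, 0 ≤ w a) (h1 : ∀ a, w a ≤ 1) (hz : ∀ a, w a = 0 → N a = 0)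
    (hm : ∀ a, (N a : ℝ) ≤ m a) :
    (2:ℝ) ^ (∑ a, m a * Real.logb 2 (w a)) ≤ ∏ a, w a ^ (N a) := by
  rw [two_rpow_sum]
  refine Finset.prod_le_prod (fun a _ => (Real.rpow_pos_of_pos two_pos _).le) (fun a _ => ?_)
  rcases eq_or_lt_of_le (h0 a) with hw | hw
  · rw [← hw, hz a hw.symm]
    simp
  · have hlog : (2:ℝ) ^ Real.logb 2 (w a) = w a := Real.rpow_logb two_pos (by norm_num) hw
    calc (2:ℝ) ^ (m a * Real.logb 2 (w a)) ≤ (2:ℝ) ^ ((N a : ℝ) * Real.logb 2 (w a)) := by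
          apply (Real.rpow_le_rpow_left_iff one_lt_two).mpr
          exact mul_le_mul_of_nonpos_right (hm a) (Real.logb_nonpos one_lt_two (h0 a) (h1 a))
      _ = w a ^ N a := by
          rw [mul_comm, Real.rpow_mul (by norm_num : (0:ℝ) ≤ 2), hlog, Real.rpow_natCast]

lemma prod_pow_le_rpow {A : Type} [Fintype A] {w : A → ℝ} {N : A → ℕ} {m : A → ℝ}
    (h0 : ∀ a, 0 ≤ w a) (h1 : ∀ a, w a ≤ 1) (hz : ∀ a, w a = 0 → N a = 0)
    (hm : ∀ a, m a ≤ (N a : ℝ)) :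
    ∏ a, w a ^ (N a) ≤ (2:ℝ) ^ (∑ a, m a * Real.logb 2 (w a)) := by
  rw [two_rpow_sum]
  refine Finset.prod_le_prod (fun a _ => pow_nonneg (h0 a) _) (fun a _ => ?_)
  rcases eq_or_lt_of_le (h0 a) with hw | hw
  · rw [← hw, hz a hw.symm]
    simp
  · have hlog : (2:ℝ) ^ Real.logb 2 (w a) = w a := Real.rpow_logb two_pos (by norm_num) hw
    calc w a ^ N a = (2:ℝ) ^ ((N a : ℝ) * Real.logb 2 (w a)) := by
          rw [mul_comm, Real.rpow_mul (by norm_num : (0:ℝ) ≤ 2), hlog, Real.rpow_natCast]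
      _ ≤ (2:ℝ) ^ (m a * Real.logb 2 (w a)) := by
          apply (Real.rpow_le_rpow_left_iff one_lt_two).mpr
          exact mul_le_mul_of_nonpos_right (hm a) (Real.logb_nonpos one_lt_two (h0 a) (h1 a))

lemma prod_comp_nOcc {A : Type} [Fintype A] {n : ℕ} (f : A → ℝ) (x : Fin n → A) :
    ∏ j, f (x j) = ∏ a, f a ^ nOcc x a := by
  rw [← Finset.prod_fiberwise Finset.univ x (fun j => f (x j))]
  refine Finset.prod_congr rfl fun a _ => ?_
  calc ∏ j ∈ Finset.univ.filter (fun j => x j = a), f (x j)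
      = ∏ j ∈ Finset.univ.filter (fun j => x j = a), f a :=
        Finset.prod_congr rfl fun j hj => by rw [(Finset.mem_filter.mp hj).2]
    _ = f a ^ nOcc x a := by rw [Finset.prod_const, nOcc]

lemma nOcc_fst {H Y : Type} [Fintype H] [Fintype Y] {n : ℕ} (x : Fin n → H × Y) (h : H) :
    nOcc (fun j => (x j).1) h = ∑ y, nOcc x (h, y) := by
  simp only [nOcc, Finset.card_filter]
  rw [Finset.sum_comm]
  refine Finset.sum_congr rfl fun j _ => ?_
  simp only [Prod.ext_iff]
  by_cases hx : (x j).1 = h <;> simp [hx, Finset.sum_ite_eq]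

lemma nOcc_snd {H Y : Type} [Fintype H] [Fintype Y] {n : ℕ} (x : Fin n → H × Y) (y : Y) :
    nOcc (fun j => (x j).2) y = ∑ h, nOcc x (h, y) := by
  simp only [nOcc, Finset.card_filter]
  rw [Finset.sum_comm]
  refine Finset.sum_congr rfl fun j _ => ?_
  simp only [Prod.ext_iff]
  by_cases hx : (x j).2 = y <;> simp [hx, Finset.sum_ite_eq]

lemma typ_bounds {A : Type} [Fintype A] {p : A → ℝ} {ε : ℝ} {n : ℕ} (hn : 0 < n)
    {x : Fin n → A} (ht : StrongTypical p ε x) (a : A) :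
    (n:ℝ) * ((1 - ε) * p a) ≤ (nOcc x a : ℝ) ∧ (nOcc x a : ℝ) ≤ (n:ℝ) * ((1 + ε) * p a) := by
  have hn' : (0:ℝ) < n := by exact_mod_cast hn
  have h := abs_le.mp (ht a)
  have h1 : (1 - ε) * p a ≤ (nOcc x a : ℝ) / n := by linarith [h.1]
  have h2 : (nOcc x a : ℝ) / n ≤ (1 + ε) * p a := by linarith [h.2]
  constructor
  · have := (le_div_iff₀ hn').mp h1; nlinarith
  · have := (div_le_iff₀ hn').mp h2; nlinarith

lemma typ_zero {A : Type} [Fintype A] {p : A → ℝ} {ε : ℝ} {n : ℕ} (hn : 0 < n)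
    {x : Fin n → A} (ht : StrongTypical p ε x) {a : A} (hpa : p a = 0) : nOcc x a = 0 := by
  have h := (typ_bounds hn ht a).2
  rw [hpa] at h
  simp only [mul_zero] at h
  exact Nat.cast_eq_zero.mp (le_antisymm h (Nat.cast_nonneg _))

lemma typ_margY_pos {H Y : Type} [Fintype H] [Fintype Y] {p : H × Y → ℝ} (hp : IsPmf p)
    {ε : ℝ} {n : ℕ} (hn : 0 < n) {u : Fin n → H} {y : Fin n → Y}
    (ht : StrongTypical p ε (fun j => (u j, y j))) (j : Fin n) :
    0 < margY' p (y j) := by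
  have h0 : 0 ≤ margY' p (y j) := Finset.sum_nonneg fun h _ => hp.1 _
  rcases h0.lt_or_eq with h | h
  · exact h
  · exfalso
    have hall := (Finset.sum_eq_zero_iff_of_nonneg (fun h _ => hp.1 (h, y j))).mp h.symm
    have hz : p (u j, y j) = 0 := hall (u j) (Finset.mem_univ _)
    have h1 : nOcc (fun j => (u j, y j)) (u j, y j) = 0 := typ_zero hn ht hz
    have h2 : 0 < nOcc (fun i => (u i, y i)) (u j, y j) :=
      Finset.card_pos.mpr ⟨j, by simp [nOcc]⟩
    omega

lemma prod_le_two_rpow {A : Type} [Fintype A] {w : A → ℝ} {ε : ℝ} {n : ℕ}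
    (h0 : ∀ a, 0 ≤ w a) (h1 : ∀ a, w a ≤ 1) {x : Fin n → A}
    (hlow : ∀ a, (n:ℝ) * ((1-ε) * w a) ≤ (nOcc x a : ℝ))
    (hz : ∀ a, w a = 0 → nOcc x a = 0) :
    ∏ j, w (x j) ≤ (2:ℝ) ^ ((n:ℝ) * ((1-ε) * negEnt w)) := by
  rw [prod_comp_nOcc]
  refine (prod_pow_le_rpow h0 h1 hz (m := fun a => (n:ℝ) * ((1-ε) * w a)) hlow).trans
    (le_of_eq ?_)
  congr 1
  simp only [negEnt, Finset.mul_sum]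
  exact Finset.sum_congr rfl fun a _ => by ring

lemma two_rpow_le_prod {A : Type} [Fintype A] {w : A → ℝ} {ε : ℝ} {n : ℕ}
    (h0 : ∀ a, 0 ≤ w a) (h1 : ∀ a, w a ≤ 1) {x : Fin n → A}
    (hup : ∀ a, (nOcc x a : ℝ) ≤ (n:ℝ) * ((1+ε) * w a))
    (hz : ∀ a, w a = 0 → nOcc x a = 0) :
    (2:ℝ) ^ ((n:ℝ) * ((1+ε) * negEnt w)) ≤ ∏ j, w (x j) := by
  rw [prod_comp_nOcc]
  refine le_trans (le_of_eq ?_)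
    (rpow_le_prod_pow h0 h1 hz (m := fun a => (n:ℝ) * ((1+ε) * w a)) hup)
  congr 1
  simp only [negEnt, Finset.mul_sum]
  exact Finset.sum_congr rfl fun a _ => by ring

lemma nOcc_fst_low {H Y : Type} [Fintype H] [Fintype Y] {p : H × Y → ℝ}
    {ε : ℝ} {n : ℕ} (hn : 0 < n) {u : Fin n → H} {y : Fin n → Y}
    (ht : StrongTypical p ε (fun j => (u j, y j))) (h : H) :
    (n:ℝ) * ((1-ε) * margH p h) ≤ (nOcc u h : ℝ) := by
  have he : nOcc u h = ∑ y', nOcc (fun j => (u j, y j)) (h, y') := by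
    have := nOcc_fst (fun j => (u j, y j)) h
    simpa using this
  rw [he]
  push_cast
  calc (n:ℝ) * ((1-ε) * margH p h) = ∑ y', (n:ℝ) * ((1-ε) * p (h, y')) := by
        simp only [margH, Finset.mul_sum]
    _ ≤ ∑ y', ((nOcc (fun j => (u j, y j)) (h, y') : ℕ) : ℝ) :=
        Finset.sum_le_sum fun y' _ => (typ_bounds hn ht (h, y')).1

lemma nOcc_fst_zero {H Y : Type} [Fintype H] [Fintype Y] {p : H × Y → ℝ} (hp : IsPmf p)
    {ε : ℝ} {n : ℕ} (hn : 0 < n) {u : Fin n → H} {y : Fin n → Y}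
    (ht : StrongTypical p ε (fun j => (u j, y j))) {h : H} (hh : margH p h = 0) :
    nOcc u h = 0 := by
  have he : nOcc u h = ∑ y', nOcc (fun j => (u j, y j)) (h, y') := by
    simpa using nOcc_fst (fun j => (u j, y j)) h
  rw [he]
  refine Finset.sum_eq_zero fun y' _ => ?_
  have hz : p (h, y') = 0 :=
    (Finset.sum_eq_zero_iff_of_nonneg (fun y'' _ => hp.1 (h, y''))).mp hh y' (Finset.mem_univ _)
  exact typ_zero hn ht hz

lemma nOcc_snd_low {H Y : Type} [Fintype H] [Fintype Y] {p : H × Y → ℝ}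
    {ε : ℝ} {n : ℕ} (hn : 0 < n) {u : Fin n → H} {y : Fin n → Y}
    (ht : StrongTypical p ε (fun j => (u j, y j))) (yv : Y) :
    (n:ℝ) * ((1-ε) * margY' p yv) ≤ (nOcc y yv : ℝ) := by
  have he : nOcc y yv = ∑ h, nOcc (fun j => (u j, y j)) (h, yv) := by
    simpa using nOcc_snd (fun j => (u j, y j)) yv
  rw [he]
  push_cast
  calc (n:ℝ) * ((1-ε) * margY' p yv) = ∑ h, (n:ℝ) * ((1-ε) * p (h, yv)) := by
        simp only [margY', Finset.mul_sum]
    _ ≤ ∑ h, ((nOcc (fun j => (u j, y j)) (h, yv) : ℕ) : ℝ) :=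
        Finset.sum_le_sum fun h _ => (typ_bounds hn ht (h, yv)).1

lemma nOcc_snd_zero {H Y : Type} [Fintype H] [Fintype Y] {p : H × Y → ℝ} (hp : IsPmf p)
    {ε : ℝ} {n : ℕ} (hn : 0 < n) {u : Fin n → H} {y : Fin n → Y}
    (ht : StrongTypical p ε (fun j => (u j, y j))) {yv : Y} (hh : margY' p yv = 0) :
    nOcc y yv = 0 := by
  have he : nOcc y yv = ∑ h, nOcc (fun j => (u j, y j)) (h, yv) := by
    simpa using nOcc_snd (fun j => (u j, y j)) yv
  rw [he]
  refine Finset.sum_eq_zero fun h _ => ?_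
  have hz : p (h, yv) = 0 :=
    (Finset.sum_eq_zero_iff_of_nonneg (fun h' _ => hp.1 (h', yv))).mp hh h (Finset.mem_univ _)
  exact typ_zero hn ht hz

lemma listB {H Y : Type} [Fintype H] [Fintype Y] {p : H × Y → ℝ} (hp : IsPmf p)
    {ε : ℝ} (hε : 0 < ε) {n : ℕ} (hn : 0 < n) (y : Fin n → Y) :
    ∑ u : Fin n → H, (if StrongTypical p ε (fun j => (u j, y j)) then ∏ j, margH p (u j) else 0)
      ≤ (2:ℝ) ^ ((n:ℝ) * ((1-ε) * negEnt (margH p) + (1-ε) * negEnt (margY' p)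
          - (1+ε) * negEnt p)) := by
  set c2 : ℝ := (2:ℝ) ^ ((n:ℝ) * ((1-ε) * negEnt (margH p) + (1-ε) * negEnt (margY' p)
      - (1+ε) * negEnt p)) with hc2
  have hc2pos : 0 < c2 := Real.rpow_pos_of_pos two_pos _
  rw [← Finset.sum_filter]
  set T := Finset.univ.filter
    (fun u : Fin n → H => StrongTypical p ε (fun j => (u j, y j))) with hT
  by_cases hcase : ∃ j, margY' p (y j) = 0
  · obtain ⟨j, hj⟩ := hcase
    have hTe : T = ∅ := by
      rw [Finset.eq_empty_iff_forall_notMem]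
      intro u hu
      have ht := (Finset.mem_filter.mp hu).2
      have := typ_margY_pos hp hn ht j
      rw [hj] at this
      exact lt_irrefl 0 this
    rw [hTe, Finset.sum_empty]
    exact hc2pos.le
  · push_neg at hcase
    have hYpos : ∀ j, 0 < margY' p (y j) := fun j =>
      lt_of_le_of_ne (Finset.sum_nonneg fun h _ => hp.1 _) (Ne.symm (hcase j))
    set PY := ∏ j, margY' p (y j) with hPY
    have hPYpos : 0 < PY := Finset.prod_pos fun j _ => hYpos j
    have hmH := isPmf_margH hp
    have hmY := isPmf_margY' hp
    have key : (∑ u ∈ T, ∏ j, margH p (u j)) * PY ≤ c2 * PY := by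
      have point : ∀ u ∈ T, (∏ j, margH p (u j)) * PY ≤ c2 * ∏ j, p (u j, y j) := by
        intro u hu
        have ht := (Finset.mem_filter.mp hu).2
        have hH : ∏ j, margH p (u j) ≤ (2:ℝ) ^ ((n:ℝ) * ((1-ε) * negEnt (margH p))) :=
          prod_le_two_rpow hmH.1 (pmf_le_one hmH) (nOcc_fst_low hn ht)
            (fun h hh => nOcc_fst_zero hp hn ht hh)
        have hY2 : PY ≤ (2:ℝ) ^ ((n:ℝ) * ((1-ε) * negEnt (margY' p))) :=
          prod_le_two_rpow hmY.1 (pmf_le_one hmY) (nOcc_snd_low hn ht)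
            (fun yv hyv => nOcc_snd_zero hp hn ht hyv)
        have hJ : (2:ℝ) ^ ((n:ℝ) * ((1+ε) * negEnt p)) ≤ ∏ j, p (u j, y j) := by
          have := two_rpow_le_prod hp.1 (pmf_le_one hp)
            (x := fun j => (u j, y j))
            (fun a => (typ_bounds hn ht a).2)
            (fun a ha => typ_zero hn ht ha)
          exact this
        have hHnn : 0 ≤ ∏ j, margH p (u j) := Finset.prod_nonneg fun j _ => hmH.1 _
        calc (∏ j, margH p (u j)) * PY
            ≤ (2:ℝ) ^ ((n:ℝ) * ((1-ε) * negEnt (margH p)))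
              * (2:ℝ) ^ ((n:ℝ) * ((1-ε) * negEnt (margY' p))) :=
              mul_le_mul hH hY2 hPYpos.le (Real.rpow_pos_of_pos two_pos _).le
          _ = c2 * (2:ℝ) ^ ((n:ℝ) * ((1+ε) * negEnt p)) := by
              rw [hc2, ← Real.rpow_add two_pos, ← Real.rpow_add two_pos]
              congr 1
              ring
          _ ≤ c2 * ∏ j, p (u j, y j) :=
              mul_le_mul_of_nonneg_left hJ hc2pos.le
      calc (∑ u ∈ T, ∏ j, margH p (u j)) * PY = ∑ u ∈ T, (∏ j, margH p (u j)) * PY :=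
            Finset.sum_mul _ _ _
        _ ≤ ∑ u ∈ T, c2 * ∏ j, p (u j, y j) := Finset.sum_le_sum point
        _ = c2 * ∑ u ∈ T, ∏ j, p (u j, y j) := (Finset.mul_sum _ _ _).symm
        _ ≤ c2 * ∑ u : Fin n → H, ∏ j, p (u j, y j) := by
            refine mul_le_mul_of_nonneg_left ?_ hc2pos.le
            exact Finset.sum_le_sum_of_subset_of_nonneg (Finset.filter_subset _ _)
              (fun u _ _ => Finset.prod_nonneg fun j _ => hp.1 _)
        _ = c2 * PY := by
            congr 1
            have hps := Finset.prod_univ_sum (fun _ : Fin n => (Finset.univ : Finset H))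
              (fun j h => p (h, y j))
            rw [Fintype.piFinset_univ] at hps
            rw [← hps]
            rfl
    exact le_of_mul_le_mul_right key hPYpos

lemma listA {H Y : Type} [Fintype H] [Fintype Y] {p : H × Y → ℝ} (hp : IsPmf p)
    {ε : ℝ} (hε : 0 < ε) {n : ℕ} (hn : 0 < n) (q : (Fin n → Y) → ℝ)
    (hq0 : ∀ y, 0 ≤ q y) (hq1 : ∑ y, q y = 1) :
    ∑ y : Fin n → Y, ∑ u : Fin n → H,
        (if StrongTypical p ε (fun j => (u j, y j)) then q y * ∏ j, margH p (u j) else 0)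
      ≤ (2:ℝ) ^ ((n:ℝ) * ((1-ε) * negEnt (margH p) + (1-ε) * negEnt (margY' p)
          - (1+ε) * negEnt p)) := by
  calc ∑ y : Fin n → Y, ∑ u : Fin n → H,
        (if StrongTypical p ε (fun j => (u j, y j)) then q y * ∏ j, margH p (u j) else 0)
      = ∑ y : Fin n → Y, q y * ∑ u : Fin n → H,
          (if StrongTypical p ε (fun j => (u j, y j)) then ∏ j, margH p (u j) else 0) := by
        refine Finset.sum_congr rfl fun y _ => ?_
        rw [Finset.mul_sum]
        refine Finset.sum_congr rfl fun u _ => ?_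
        split <;> simp
    _ ≤ ∑ y : Fin n → Y, q y * (2:ℝ) ^ ((n:ℝ) * ((1-ε) * negEnt (margH p)
          + (1-ε) * negEnt (margY' p) - (1+ε) * negEnt p)) :=
        Finset.sum_le_sum fun y _ => mul_le_mul_of_nonneg_left (listB hp hε hn y) (hq0 y)
    _ = (2:ℝ) ^ ((n:ℝ) * ((1-ε) * negEnt (margH p) + (1-ε) * negEnt (margY' p)
          - (1+ε) * negEnt p)) := by
        rw [← Finset.sum_mul, hq1, one_mul]

lemma bin_count {Z B : ℕ} (hB : 0 < B) {z z0 : Fin Z} (hz : z ≠ z0) :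
    (∑ b : Fin Z → Fin B, if b z = b z0 then (1:ℝ) else 0) * (((B:ℝ)) ^ Z)⁻¹ ≤ (B:ℝ)⁻¹ := by
  have hZ : 0 < Z := z.pos
  have hBpos : (0:ℝ) < B := by exact_mod_cast hB
  have hcard : (∑ b : Fin Z → Fin B, if b z = b z0 then (1:ℝ) else 0)
      = ((Finset.univ.filter (fun b : Fin Z → Fin B => b z = b z0)).card : ℝ) := by
    rw [Finset.card_filter]
    push_cast
    rfl
  rw [hcard]
  have hle : (Finset.univ.filter (fun b : Fin Z → Fin B => b z = b z0)).card ≤ B ^ (Z - 1) := by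
    have hinj : (Finset.univ.filter (fun b : Fin Z → Fin B => b z = b z0)).card
        ≤ (Finset.univ : Finset ({w : Fin Z // ¬ (w = z)} → Fin B)).card := by
      refine Finset.card_le_card_of_injOn (fun b w => b w.1)
        (fun _ _ => Finset.mem_univ _) ?_
      intro b1 h1 b2 h2 hfun
      funext w
      by_cases hw : w = z
      · subst hw
        have e1 := (Finset.mem_filter.mp h1).2
        have e2 := (Finset.mem_filter.mp h2).2
        have := congrFun hfun ⟨z0, fun he => hz he.symm⟩
        simp only at this
        rw [e1, e2]
        exact this
      · exact congrFun hfun ⟨w, hw⟩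
    have hcardfun : (Finset.univ : Finset ({w : Fin Z // ¬ (w = z)} → Fin B)).card
        = B ^ (Z - 1) := by
      rw [Finset.card_univ, Fintype.card_fun, Fintype.card_fin]
      congr 1
      rw [Fintype.card_subtype_compl, Fintype.card_subtype_eq, Fintype.card_fin]
    rw [hcardfun] at hinj
    exact hinj
  have hBZ : ((B:ℝ))^Z = (B:ℝ)^(Z-1) * B := by
    have hzz : Z - 1 + 1 = Z := Nat.succ_pred_eq_of_pos hZ
    rw [← pow_succ, hzz]
  calc ((Finset.univ.filter (fun b : Fin Z → Fin B => b z = b z0)).card : ℝ) * (((B:ℝ))^Z)⁻¹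
      ≤ ((B:ℝ)^(Z-1)) * (((B:ℝ))^Z)⁻¹ := by
        refine mul_le_mul_of_nonneg_right ?_ (inv_nonneg.mpr (pow_nonneg hBpos.le _))
        exact_mod_cast hle
    _ = (B:ℝ)⁻¹ := by
        rw [hBZ]
        field_simp

lemma binProb_le {H Y : Type} [Fintype H] [Fintype Y] {p : H × Y → ℝ} (hp : IsPmf p)
    {ε : ℝ} (hε : 0 < ε) {n Z B : ℕ} (hn : 0 < n) (hB : 0 < B) (z0 : Fin Z)
    {ν : (Fin n → Y) × (Fin Z → Fin n → H) → ℝ} (hν : IsPmf ν)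
    (hind : ∀ z : Fin Z, z ≠ z0 → ∀ (y : Fin n → Y) (u : Fin n → H),
      rvDist ν (fun ω => (ω.1, ω.2 z)) (y, u) =
        rvDist ν (fun ω => ω.1) y * ∏ j, margH p (u j)) :
    binProb p ε B z0 ν ≤ ((Z - 1 : ℕ) : ℝ) * ((B:ℝ)⁻¹ *
      (2:ℝ) ^ ((n:ℝ) * ((1-ε) * negEnt (margH p) + (1-ε) * negEnt (margY' p)
        - (1+ε) * negEnt p))) := by
  set c2 : ℝ := (2:ℝ) ^ ((n:ℝ) * ((1-ε) * negEnt (margH p) + (1-ε) * negEnt (margY' p)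
      - (1+ε) * negEnt p)) with hc2
  have hc2pos : 0 < c2 := Real.rpow_pos_of_pos two_pos _
  have hBpos : (0:ℝ) < B := by exact_mod_cast hB
  have hinvnn : (0:ℝ) ≤ ((B:ℝ) ^ Z)⁻¹ := inv_nonneg.mpr (pow_nonneg hBpos.le _)
  have hq := rvDist_isPmf hν (fun ω : (Fin n → Y) × (Fin Z → Fin n → H) => ω.1)
  -- per-index typicality probability bound
  have Pz_le : ∀ z : Fin Z, z ≠ z0 →
      (∑ ω : (Fin n → Y) × (Fin Z → Fin n → H),
        if StrongTypical p ε (fun j => (ω.2 z j, ω.1 j)) then ν ω else 0) ≤ c2 := by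
    intro z hz
    have hre : (∑ ω : (Fin n → Y) × (Fin Z → Fin n → H),
        if StrongTypical p ε (fun j => (ω.2 z j, ω.1 j)) then ν ω else 0)
        = ∑ y : Fin n → Y, ∑ u : Fin n → H,
            (if StrongTypical p ε (fun j => (u j, y j)) then
              rvDist ν (fun ω => (ω.1, ω.2 z)) (y, u) else 0) := by
      symm
      calc ∑ y : Fin n → Y, ∑ u : Fin n → H,
            (if StrongTypical p ε (fun j => (u j, y j)) then
              rvDist ν (fun ω => (ω.1, ω.2 z)) (y, u) else 0)
          = ∑ w : (Fin n → Y) × (Fin n → H),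
              (if StrongTypical p ε (fun j => (w.2 j, w.1 j)) then
                rvDist ν (fun ω => (ω.1, ω.2 z)) w else 0) := by
            rw [Fintype.sum_prod_type]
        _ = ∑ w : (Fin n → Y) × (Fin n → H),
              ∑ ω : (Fin n → Y) × (Fin Z → Fin n → H),
              (if StrongTypical p ε (fun j => (w.2 j, w.1 j)) then
                (if (ω.1, ω.2 z) = w then ν ω else 0) else 0) := by
            refine Finset.sum_congr rfl fun w _ => ?_
            by_cases htyp : StrongTypical p ε (fun j => (w.2 j, w.1 j))
            · simp only [if_pos htyp]
              rw [rvDist]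
              exact Finset.sum_congr rfl fun x _ => by congr
            · simp [htyp]
        _ = ∑ ω : (Fin n → Y) × (Fin Z → Fin n → H),
              ∑ w : (Fin n → Y) × (Fin n → H),
              (if StrongTypical p ε (fun j => (w.2 j, w.1 j)) then
                (if (ω.1, ω.2 z) = w then ν ω else 0) else 0) := Finset.sum_comm
        _ = ∑ ω : (Fin n → Y) × (Fin Z → Fin n → H),
              (if StrongTypical p ε (fun j => (ω.2 z j, ω.1 j)) then ν ω else 0) := by
            refine Finset.sum_congr rfl fun ω _ => ?_
            have hsw : ∀ w : (Fin n → Y) × (Fin n → H),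
                (if StrongTypical p ε (fun j => (w.2 j, w.1 j)) then
                  (if (ω.1, ω.2 z) = w then ν ω else 0) else 0)
                = (if (ω.1, ω.2 z) = w then
                    (if StrongTypical p ε (fun j => (w.2 j, w.1 j)) then ν ω else 0) else 0) := by
              intro w
              by_cases h1 : StrongTypical p ε (fun j => (w.2 j, w.1 j)) <;>
                by_cases h2 : (ω.1, ω.2 z) = w <;> simp [h1, h2]
            simp_rw [hsw]
            rw [Finset.sum_ite_eq]
            simp
    rw [hre]
    have hrw : ∀ (y : Fin n → Y) (u : Fin n → H),
        (if StrongTypical p ε (fun j => (u j, y j)) then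
          rvDist ν (fun ω => (ω.1, ω.2 z)) (y, u) else 0)
        = (if StrongTypical p ε (fun j => (u j, y j)) then
            rvDist ν (fun ω => ω.1) y * ∏ j, margH p (u j) else 0) := fun y u => by
      rw [hind z hz y u]
    simp_rw [hrw]
    exact listA hp hε hn _ hq.1 hq.2
  -- union bound
  rw [binProb]
  have step1 : ∀ (ω : (Fin n → Y) × (Fin Z → Fin n → H)) (b : Fin Z → Fin B),
      (if ∃ z : Fin Z, z ≠ z0 ∧ b z = b z0 ∧
          StrongTypical p ε (fun j => (ω.2 z j, ω.1 j)) then ν ω * ((B:ℝ)^Z)⁻¹ else 0)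
      ≤ ∑ z ∈ Finset.univ.erase z0,
          (if b z = b z0 ∧ StrongTypical p ε (fun j => (ω.2 z j, ω.1 j)) then
            ν ω * ((B:ℝ)^Z)⁻¹ else 0) := by
    intro ω b
    have base : (0:ℝ) ≤ ν ω * ((B:ℝ)^Z)⁻¹ := mul_nonneg (hν.1 ω) hinvnn
    have hnn : ∀ z ∈ Finset.univ.erase z0, (0:ℝ) ≤
        (if b z = b z0 ∧ StrongTypical p ε (fun j => (ω.2 z j, ω.1 j)) then
          ν ω * ((B:ℝ)^Z)⁻¹ else 0) := by
      intro z _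
      split
      · exact base
      · exact le_rfl
    by_cases hex : ∃ z : Fin Z, z ≠ z0 ∧ b z = b z0 ∧
        StrongTypical p ε (fun j => (ω.2 z j, ω.1 j))
    · obtain ⟨z, hz, hb, hty⟩ := hex
      rw [if_pos ⟨z, hz, hb, hty⟩]
      have hmem : z ∈ Finset.univ.erase z0 := Finset.mem_erase.mpr ⟨hz, Finset.mem_univ z⟩
      have := Finset.single_le_sum hnn hmem
      rw [if_pos ⟨hb, hty⟩] at this
      exact this
    · rw [if_neg hex]
      exact Finset.sum_nonneg hnn
  calc (∑ ω : (Fin n → Y) × (Fin Z → Fin n → H), ∑ b : Fin Z → Fin B,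
        if ∃ z : Fin Z, z ≠ z0 ∧ b z = b z0 ∧
            StrongTypical p ε (fun j => (ω.2 z j, ω.1 j)) then ν ω * ((B:ℝ)^Z)⁻¹ else 0)
      ≤ ∑ ω : (Fin n → Y) × (Fin Z → Fin n → H), ∑ b : Fin Z → Fin B,
          ∑ z ∈ Finset.univ.erase z0,
            (if b z = b z0 ∧ StrongTypical p ε (fun j => (ω.2 z j, ω.1 j)) then
              ν ω * ((B:ℝ)^Z)⁻¹ else 0) :=
        Finset.sum_le_sum fun ω _ => Finset.sum_le_sum fun b _ => step1 ω b
    _ = ∑ z ∈ Finset.univ.erase z0, ∑ ω : (Fin n → Y) × (Fin Z → Fin n → H),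
          ∑ b : Fin Z → Fin B,
            (if b z = b z0 ∧ StrongTypical p ε (fun j => (ω.2 z j, ω.1 j)) then
              ν ω * ((B:ℝ)^Z)⁻¹ else 0) := by
        rw [show (∑ ω : (Fin n → Y) × (Fin Z → Fin n → H), ∑ b : Fin Z → Fin B,
            ∑ z ∈ Finset.univ.erase z0,
              (if b z = b z0 ∧ StrongTypical p ε (fun j => (ω.2 z j, ω.1 j)) then
                ν ω * ((B:ℝ)^Z)⁻¹ else 0))
            = ∑ ω : (Fin n → Y) × (Fin Z → Fin n → H), ∑ z ∈ Finset.univ.erase z0,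
                ∑ b : Fin Z → Fin B,
                  (if b z = b z0 ∧ StrongTypical p ε (fun j => (ω.2 z j, ω.1 j)) then
                    ν ω * ((B:ℝ)^Z)⁻¹ else 0) from
          Finset.sum_congr rfl fun ω _ => Finset.sum_comm]
        exact Finset.sum_comm
    _ ≤ ∑ z ∈ Finset.univ.erase z0, (B:ℝ)⁻¹ * c2 := by
        refine Finset.sum_le_sum fun z hz => ?_
        have hzne : z ≠ z0 := (Finset.mem_erase.mp hz).1
        have hfac : ∀ (ω : (Fin n → Y) × (Fin Z → Fin n → H)) (b : Fin Z → Fin B),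
            (if b z = b z0 ∧ StrongTypical p ε (fun j => (ω.2 z j, ω.1 j)) then
              ν ω * ((B:ℝ)^Z)⁻¹ else 0)
            = (if StrongTypical p ε (fun j => (ω.2 z j, ω.1 j)) then ν ω else 0)
              * ((if b z = b z0 then (1:ℝ) else 0) * ((B:ℝ)^Z)⁻¹) := by
          intro ω b
          by_cases h1 : b z = b z0 <;>
            by_cases h2 : StrongTypical p ε (fun j => (ω.2 z j, ω.1 j)) <;>
            simp [h1, h2]
        calc (∑ ω : (Fin n → Y) × (Fin Z → Fin n → H), ∑ b : Fin Z → Fin B,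
              (if b z = b z0 ∧ StrongTypical p ε (fun j => (ω.2 z j, ω.1 j)) then
                ν ω * ((B:ℝ)^Z)⁻¹ else 0))
            = ∑ ω : (Fin n → Y) × (Fin Z → Fin n → H),
                (if StrongTypical p ε (fun j => (ω.2 z j, ω.1 j)) then ν ω else 0)
                * ((∑ b : Fin Z → Fin B, if b z = b z0 then (1:ℝ) else 0) * ((B:ℝ)^Z)⁻¹) := by
              refine Finset.sum_congr rfl fun ω _ => ?_
              rw [Finset.sum_congr rfl fun b _ => hfac ω b]
              rw [← Finset.mul_sum, ← Finset.sum_mul]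
          _ ≤ ∑ ω : (Fin n → Y) × (Fin Z → Fin n → H),
                (if StrongTypical p ε (fun j => (ω.2 z j, ω.1 j)) then ν ω else 0) * (B:ℝ)⁻¹ := by
              refine Finset.sum_le_sum fun ω _ => ?_
              refine mul_le_mul_of_nonneg_left (bin_count hB hzne) ?_
              split
              · exact hν.1 ω
              · exact le_rfl
          _ = (∑ ω : (Fin n → Y) × (Fin Z → Fin n → H),
                (if StrongTypical p ε (fun j => (ω.2 z j, ω.1 j)) then ν ω else 0)) * (B:ℝ)⁻¹ :=
              (Finset.sum_mul _ _ _).symm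
          _ ≤ (B:ℝ)⁻¹ * c2 := by
              rw [mul_comm]
              exact mul_le_mul_of_nonneg_left (Pz_le z hzne) (inv_nonneg.mpr hBpos.le)
    _ = ((Z - 1 : ℕ) : ℝ) * ((B:ℝ)⁻¹ * c2) := by
        rw [Finset.sum_const, Finset.card_erase_of_mem (Finset.mem_univ z0),
          Finset.card_univ, Fintype.card_fin, nsmul_eq_mul]

/-- **Binning/list-decoding step of the compress-and-forward scheme.**  Let `(Ŷ,Y)`
have joint pmf `p`.  For each blocklength `n` let `Yⁿ` and the `⌈2^{nR̂}⌉` codewords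
`Ŷⁿ(z)` have an arbitrary joint distribution such that for every `z ≠ z0` the
codeword `Ŷⁿ(z)` is i.i.d. `∼ p(ŷ)` and independent of `Yⁿ`, and let each index be
assigned independently and uniformly to one of `⌈2^{nR}⌉` bins.  There is `δ(ε) > 0`
with `δ(ε) → 0` as `ε → 0` such that if `R̂ < R + I(Ŷ;Y) − δ(ε)` then the probability
that some `z ≠ z0` lies in the bin of `z0` and is jointly strongly `ε`-typical with
`Yⁿ` tends to `0`. -/
theorem binning_list_decoding
    {H Y : Type} [Fintype H] [Fintype Y]
    (p : H × Y → ℝ) (hp : IsPmf p) :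
    ∃ δ : ℝ → ℝ, (∀ ε : ℝ, 0 < ε → 0 < δ ε) ∧
      Filter.Tendsto δ (nhdsWithin 0 (Set.Ioi 0)) (nhds 0) ∧
      ∀ ε : ℝ, 0 < ε → ∀ R Rh : ℝ,
        Rh < R + rvMI p (fun ω => ω.1) (fun ω => ω.2) - δ ε →
        ∀ (ν : (n : ℕ) →
              ((Fin n → Y) × (Fin ⌈(2:ℝ) ^ ((n:ℝ) * Rh)⌉₊ → Fin n → H) → ℝ))
          (z0 : (n : ℕ) → Fin ⌈(2:ℝ) ^ ((n:ℝ) * Rh)⌉₊),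
          (∀ n, IsPmf (ν n)) →
          -- for `z ≠ z0`, `Ŷⁿ(z)` is i.i.d. `∼ p(ŷ)` and independent of `Yⁿ`
          (∀ (n : ℕ) (z : Fin ⌈(2:ℝ) ^ ((n:ℝ) * Rh)⌉₊), z ≠ z0 n →
            ∀ (y : Fin n → Y) (u : Fin n → H),
              rvDist (ν n) (fun ω => (ω.1, ω.2 z)) (y, u) =
                rvDist (ν n) (fun ω => ω.1) y * ∏ j, margH p (u j)) →
          Filter.Tendsto
            (fun n : ℕ => binProb p ε ⌈(2:ℝ) ^ ((n:ℝ) * R)⌉₊ (z0 n) (ν n))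
            Filter.atTop (nhds 0) := by
  classical
  refine ⟨fun ε => ε * (1 + |negEnt (margH p)| + |negEnt (margY' p)| + |negEnt p|),
    ?_, ?_, ?_⟩
  · intro ε hε
    have hc : (0:ℝ) < 1 + |negEnt (margH p)| + |negEnt (margY' p)| + |negEnt p| := by
      positivity
    exact mul_pos hε hc
  · have h : Filter.Tendsto
        (fun ε : ℝ => ε * (1 + |negEnt (margH p)| + |negEnt (margY' p)| + |negEnt p|))
        (nhds 0) (nhds 0) := by
      have := (continuous_id.mul (continuous_const :
        Continuous fun _ : ℝ => (1 + |negEnt (margH p)| + |negEnt (margY' p)| + |negEnt p|))).tendsto (0:ℝ)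
      convert this using 2 <;> simp [Pi.mul_apply]
    exact h.mono_left nhdsWithin_le_nhds
  · intro ε hε R Rh hR ν z0 hν hind
    rw [rvMI_eq p] at hR
    simp only at hR
    set EH := negEnt (margH p) with hEH
    set EY := negEnt (margY' p) with hEYd
    set EJ := negEnt p with hEJ
    set κ := Rh - R + ((1-ε) * EH + (1-ε) * EY - (1+ε) * EJ) with hκ
    have hκneg : κ < 0 := by
      have hb : -(EH + EY + EJ) ≤ 1 + |EH| + |EY| + |EJ| := by
        linarith [neg_abs_le EH, neg_abs_le EY, neg_abs_le EJ]
      have hb2 : ε * (-(EH + EY + EJ)) ≤ ε * (1 + |EH| + |EY| + |EJ|) :=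
        mul_le_mul_of_nonneg_left hb hε.le
      rw [hκ]
      nlinarith [hR, hb2]
    apply squeeze_zero' (g := fun n : ℕ => (2:ℝ) ^ ((n:ℝ) * κ))
    · filter_upwards with n
      simp only [binProb]
      refine Finset.sum_nonneg fun ω _ => Finset.sum_nonneg fun b _ => ?_
      split
      · exact mul_nonneg ((hν n).1 ω) (inv_nonneg.mpr (pow_nonneg (Nat.cast_nonneg _) _))
      · exact le_rfl
    · filter_upwards [Filter.eventually_ge_atTop 1] with n hn1
      have hn : 0 < n := hn1
      have hBpos : 0 < ⌈(2:ℝ) ^ ((n:ℝ) * R)⌉₊ :=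
        Nat.ceil_pos.mpr (Real.rpow_pos_of_pos two_pos _)
      have hZpos : 0 < ⌈(2:ℝ) ^ ((n:ℝ) * Rh)⌉₊ :=
        Nat.ceil_pos.mpr (Real.rpow_pos_of_pos two_pos _)
      have h1 := binProb_le hp hε hn hBpos (z0 n) (hν n) (fun z hz y u => hind n z hz y u)
      refine h1.trans ?_
      set Zc := ⌈(2:ℝ) ^ ((n:ℝ) * Rh)⌉₊ with hZc
      set Bc := ⌈(2:ℝ) ^ ((n:ℝ) * R)⌉₊ with hBc
      set c2 := (2:ℝ) ^ ((n:ℝ) * ((1-ε) * EH + (1-ε) * EY - (1+ε) * EJ)) with hc2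
      have hc2pos : 0 < c2 := Real.rpow_pos_of_pos two_pos _
      have hZle : ((Zc - 1 : ℕ) : ℝ) ≤ (2:ℝ) ^ ((n:ℝ) * Rh) := by
        have h2 := Nat.ceil_lt_add_one (le_of_lt (Real.rpow_pos_of_pos two_pos ((n:ℝ) * Rh)))
        have h3 : ((Zc - 1 : ℕ) : ℝ) = (Zc : ℝ) - 1 := by
          rw [Nat.cast_sub hZpos, Nat.cast_one]
        rw [h3, hZc]
        linarith [h2]
      have hBle : ((Bc:ℝ))⁻¹ ≤ ((2:ℝ) ^ ((n:ℝ) * R))⁻¹ :=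
        inv_anti₀ (Real.rpow_pos_of_pos two_pos _) (Nat.le_ceil _)
      calc ((Zc - 1 : ℕ) : ℝ) * ((Bc:ℝ)⁻¹ * c2)
          ≤ (2:ℝ) ^ ((n:ℝ) * Rh) * (((2:ℝ) ^ ((n:ℝ) * R))⁻¹ * c2) := by
            refine mul_le_mul hZle (mul_le_mul_of_nonneg_right hBle hc2pos.le)
              (mul_nonneg (inv_nonneg.mpr (Nat.cast_nonneg _)) hc2pos.le)
              (Real.rpow_nonneg (by norm_num) _)
        _ = (2:ℝ) ^ ((n:ℝ) * κ) := by
            rw [hc2, ← Real.rpow_neg (by norm_num : (0:ℝ) ≤ 2),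
              ← Real.rpow_add two_pos, ← Real.rpow_add two_pos]
            congr 1
            rw [hκ]
            ring
    · have h2κ : (2:ℝ) ^ κ < 1 := Real.rpow_lt_one_of_one_lt_of_neg one_lt_two hκneg
      have h2κ0 : (0:ℝ) ≤ (2:ℝ) ^ κ := (Real.rpow_pos_of_pos two_pos κ).le
      have ht := tendsto_pow_atTop_nhds_zero_of_lt_one h2κ0 h2κ
      refine ht.congr fun n => ?_
      rw [← Real.rpow_natCast ((2:ℝ)^κ) n, ← Real.rpow_mul (by norm_num : (0:ℝ) ≤ 2), mul_comm]

end
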